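/- arXiv:2301.00703 — 4 statements merged into one kernel-verified Lean document; each statement's English description precedes it below -/
import Mathlib

section
/- Let K be a field of characteristic zero, let p(x) be a Laurent polynomial over K in one variable, and let n, n' ≥ 0. Let R be a Laurent polynomial in z_1, …, z_n over K which is invariant under all permutations of its variables, and let R' be a Laurent polynomial in n' variables invariant under all permutations of its variables. Then the rational function G(z_1, …, z_{n+n'}) := ∑_{σ ∈ S_{n+n'}} σ·[ R(z_1, …, z_n) · R'(z_{n+1}, …, z_{n+n'}) · ∏_{1 ≤ a ≤ n < b ≤ n+n'} p(z_a/z_b) · z_b/(z_b − z_a) ] (where a permutation σ acts on a rational function by permuting the variables z_1, …, z_{n+n'}) is a Laurent polynomial in z_1, …, z_{n+n'}, symmetric under all permutations of the variables. -/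
open MvPolynomial

noncomputable section

/-- The field of rational functions over `K` in countably many variables `z₀, z₁, z₂, …`. -/
abbrev Fld (K : Type*) [Field K] := FractionRing (MvPolynomial ℕ K)

/-- The generic variable `z_i`. -/
def ZZ (K : Type*) [Field K] (i : ℕ) : Fld K :=
  algebraMap (MvPolynomial ℕ K) (Fld K) (X i)

/-- Evaluation of a one-variable Laurent polynomial `p` over `K` at a rational function. -/
def lEv (K : Type*) [Field K] (p : LaurentPolynomial K) (x : Fld K) : Fld K :=
  Finsupp.sum p.coeff fun m c => algebraMap K (Fld K) c * x ^ m

/-- Evaluation of the Laurent polynomial in `n` variables with coefficient function `R`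
(the coefficient of the monomial `z₁^{e 1} ⋯ z_n^{e n}` being `R e`) at the point `v`. -/
def evF (K : Type*) [Field K] {n : ℕ} (R : (Fin n → ℤ) →₀ K) (v : Fin n → Fld K) : Fld K :=
  Finsupp.sum R fun e c => algebraMap K (Fld K) c * ∏ i, v i ^ e i

set_option synthInstance.maxHeartbeats 1000000
set_option maxHeartbeats 2000000
set_option linter.unusedSectionVars false
set_option linter.unnecessarySimpa false

namespace Stmt4Aux

section FieldSide
variable (K : Type*) [Field K] (N : ℕ)

lemma algP_inj : Function.Injective (algebraMap (MvPolynomial ℕ K) (Fld K)) :=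
  IsFractionRing.injective _ _

lemma ZZ_ne_zero (k : ℕ) : ZZ K k ≠ 0 := by
  have hX : (X k : MvPolynomial ℕ K) ≠ 0 := X_ne_zero k
  intro h
  exact hX (algP_inj K (by rw [map_zero]; exact h))

lemma ZZ_sub_ne_zero {a b : ℕ} (h : a ≠ b) : ZZ K a - ZZ K b ≠ 0 := by
  intro h0
  have : algebraMap (MvPolynomial ℕ K) (Fld K) (X a - X b) = algebraMap (MvPolynomial ℕ K) (Fld K) 0 := by
    rw [map_sub, map_zero]; exact h0
  have h1 := algP_inj K this
  exact h (X_injective (by linear_combination h1))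

/-- the embedding of polynomials in `N` variables into `Fld K` -/
def ιF : MvPolynomial (Fin N) K →ₐ[K] Fld K := aeval fun i => ZZ K i.val

lemma ιF_X (i : Fin N) : ιF K N (X i) = ZZ K i.val := aeval_X _ _

lemma ιF_eq : ιF K N = ((IsScalarTower.toAlgHom K (MvPolynomial ℕ K) (Fld K)).comp
    (rename (Fin.val : Fin N → ℕ))) := by
  refine algHom_ext fun i => ?_
  simp [ιF, ZZ]

lemma ιF_inj : Function.Injective (ιF K N) := by
  rw [ιF_eq, AlgHom.coe_comp]
  exact (algP_inj K).comp (rename_injective _ Fin.val_injective)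

/-- extend a permutation of `Fin N` to `ℕ` -/
def permN (τ : Equiv.Perm (Fin N)) : Equiv.Perm ℕ :=
  τ.extendDomain Fin.equivSubtype

lemma permN_val (τ : Equiv.Perm (Fin N)) (i : Fin N) : permN N τ i.val = (τ i).val := by
  have h := Equiv.Perm.extendDomain_apply_subtype τ (Fin.equivSubtype (n := N)) (b := i.val) i.isLt
  rw [permN, h]
  simp [Fin.equivSubtype]

lemma ψg_inj (τ : Equiv.Perm (Fin N)) :
    Function.Injective ((algebraMap (MvPolynomial ℕ K) (Fld K)).comp
      (rename (permN N τ) : MvPolynomial ℕ K →ₐ[K] MvPolynomial ℕ K).toRingHom) := by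
  rw [RingHom.coe_comp]
  exact (algP_inj K).comp (rename_injective _ (Equiv.injective _))

/-- the automorphism of `Fld K` permuting the first `N` variables -/
def ψ (τ : Equiv.Perm (Fin N)) : Fld K →+* Fld K :=
  IsFractionRing.lift (ψg_inj K N τ)

lemma ψ_alg (τ : Equiv.Perm (Fin N)) (x : MvPolynomial ℕ K) :
    ψ K N τ (algebraMap _ _ x) = algebraMap _ (Fld K) (rename (permN N τ) x) :=
  IsFractionRing.lift_algebraMap _ _

lemma ψ_ZZ (τ : Equiv.Perm (Fin N)) (k : ℕ) : ψ K N τ (ZZ K k) = ZZ K (permN N τ k) := by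
  rw [ZZ, ψ_alg, rename_X, ZZ]

lemma ψ_ZZ_fin (τ : Equiv.Perm (Fin N)) (i : Fin N) :
    ψ K N τ (ZZ K i.val) = ZZ K ((τ i).val) := by
  rw [ψ_ZZ, permN_val]

lemma ψ_algK (τ : Equiv.Perm (Fin N)) (c : K) :
    ψ K N τ (algebraMap K (Fld K) c) = algebraMap K (Fld K) c := by
  rw [IsScalarTower.algebraMap_apply K (MvPolynomial ℕ K) (Fld K), ψ_alg,
    MvPolynomial.algebraMap_eq, rename_C, ← MvPolynomial.algebraMap_eq,
    ← IsScalarTower.algebraMap_apply]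

lemma ψ_ιF (τ : Equiv.Perm (Fin N)) (Q : MvPolynomial (Fin N) K) :
    ψ K N τ (ιF K N Q) = ιF K N (rename τ Q) := by
  have h : (ψ K N τ).comp (ιF K N).toRingHom
      = ((ιF K N).toRingHom).comp (rename τ : _ →ₐ[K] MvPolynomial (Fin N) K).toRingHom := by
    refine ringHom_ext (fun c => ?_) (fun i => ?_)
    · have h1 : (ιF K N) (C c) = algebraMap K (Fld K) c := by
        rw [← MvPolynomial.algebraMap_eq, AlgHom.commutes]
      simp only [RingHom.coe_comp, Function.comp_apply, AlgHom.toRingHom_eq_coe,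
        RingHom.coe_coe, rename_C, h1, ψ_algK]
    · simp only [RingHom.coe_comp, Function.comp_apply, AlgHom.toRingHom_eq_coe,
        RingHom.coe_coe, rename_X]
      rw [ιF_X, ιF_X, ψ_ZZ_fin]
  exact RingHom.congr_fun h Q

lemma ψ_evF {k : ℕ} (τ : Equiv.Perm (Fin N)) (R : (Fin k → ℤ) →₀ K) (v : Fin k → Fld K) :
    ψ K N τ (evF K R v) = evF K R fun i => ψ K N τ (v i) := by
  rw [evF, evF, map_finsuppSum]
  refine Finsupp.sum_congr fun e _ => ?_
  rw [map_mul, ψ_algK, map_prod]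
  simp only [map_zpow₀]

lemma ψ_lEv (τ : Equiv.Perm (Fin N)) (p : LaurentPolynomial K) (x : Fld K) :
    ψ K N τ (lEv K p x) = lEv K p (ψ K N τ x) := by
  rw [lEv, lEv, map_finsuppSum]
  refine Finsupp.sum_congr fun m _ => ?_
  rw [map_mul, ψ_algK, map_zpow₀]


lemma ιF_monomial (d : Fin N →₀ ℕ) (c : K) :
    ιF K N (monomial d c) = algebraMap K (Fld K) c * ∏ i, ZZ K i.val ^ (d i) := by
  rw [ιF, aeval_monomial, Finsupp.prod_fintype _ _ fun i => pow_zero _]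


end FieldSide

section PolySide
variable {K : Type*} [Field K] [CharZero K] {N : ℕ}


/-- substitution sending `X j ↦ X i` and fixing other variables -/
def fsub (i j : Fin N) : Fin N → MvPolynomial (Fin N) K :=
  fun k => if k = j then X i else X k

/-- the substitution algebra hom -/
def sAev (i j : Fin N) : MvPolynomial (Fin N) K →ₐ[K] MvPolynomial (Fin N) K :=
  aeval (fsub i j)

lemma sAev_X (i j k : Fin N) : sAev (K := K) i j (X k) = if k = j then X i else X k := by
  rw [sAev, aeval_X, fsub]

lemma sub_dvd_sub_sAev (i j : Fin N) (Q : MvPolynomial (Fin N) K) :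
    (X j - X i) ∣ (Q - sAev i j Q) := by
  induction Q using MvPolynomial.induction_on with
  | C c => simp [sAev]
  | add P₁ P₂ h1 h2 =>
      have : P₁ + P₂ - sAev i j (P₁ + P₂)
          = (P₁ - sAev i j P₁) + (P₂ - sAev i j P₂) := by
        rw [map_add]; ring
      rw [this]; exact dvd_add h1 h2
  | mul_X P k h =>
      have : P * X k - sAev i j (P * X k)
          = (P - sAev i j P) * X k
            + sAev i j P * (X k - sAev i j (X k)) := by
        rw [map_mul]; ring
      rw [this]
      refine dvd_add (Dvd.dvd.mul_right h _) (Dvd.dvd.mul_left ?_ _)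
      rw [sAev_X]
      by_cases hk : k = j
      · subst hk; simp
      · simp [hk]

lemma dvd_iff_sAev_eq_zero (i j : Fin N) (Q : MvPolynomial (Fin N) K) :
    (X j - X i) ∣ Q ↔ sAev i j Q = 0 := by
  constructor
  · rintro ⟨M, rfl⟩
    rw [map_mul]
    have : sAev (K := K) i j (X j - X i) = 0 := by
      rw [map_sub, sAev_X, sAev_X]
      simp
    rw [this, zero_mul]
  · intro h
    have := sub_dvd_sub_sAev i j Q
    rwa [h, sub_zero] at this

lemma X_sub_X_ne_zero {a b : Fin N} (hab : a ≠ b) :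
    (X a : MvPolynomial (Fin N) K) - X b ≠ 0 := by
  intro h
  exact hab (X_injective (by linear_combination h))

lemma prime_X_sub_X {i j : Fin N} (hij : i ≠ j) :
    Prime (X j - X i : MvPolynomial (Fin N) K) := by
  refine ⟨X_sub_X_ne_zero (Ne.symm hij), ?_, ?_⟩
  · intro h
    have : (X j - X i : MvPolynomial (Fin N) K) ∣ 1 := h.dvd
    rw [dvd_iff_sAev_eq_zero, map_one] at this
    exact one_ne_zero this
  · intro a b hab
    rw [dvd_iff_sAev_eq_zero] at hab ⊢
    rw [dvd_iff_sAev_eq_zero (K := K) i j b]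
    rw [map_mul] at hab
    exact mul_eq_zero.mp hab

lemma not_dvd_X_sub_X {i j k l : Fin N} (hij : i < j) (hkl : k < l)
    (hne : (⟨i, j⟩ : Fin N × Fin N) ≠ ⟨k, l⟩) :
    ¬ ((X j - X i : MvPolynomial (Fin N) K) ∣ (X l - X k)) := by
  rw [dvd_iff_sAev_eq_zero, map_sub, sAev_X, sAev_X]
  by_cases hl : l = j
  · subst hl
    have hk : k ≠ l := ne_of_lt hkl
    rw [if_pos rfl, if_neg hk]
    refine X_sub_X_ne_zero (fun h : i = k => ?_)
    exact hne (by rw [h])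
  · by_cases hk : k = j
    · subst hk
      rw [if_neg hl, if_pos rfl]
      exact X_sub_X_ne_zero (fun h : l = i => (by omega : ¬ (i < k ∧ k < l ∧ l = i)) ⟨hij, hkl, h⟩)
    · rw [if_neg hl, if_neg hk]
      exact X_sub_X_ne_zero (ne_of_gt hkl)

/-- product of the primes over a set of sorted pairs divides `Q` -/
lemma prod_pairs_dvd (F : Finset ((_ : Fin N) × Fin N)) (Q : MvPolynomial (Fin N) K)
    (hF : ∀ x ∈ F, x.1 < x.2) (hdvd : ∀ x ∈ F, (X x.2 - X x.1) ∣ Q) :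
    (∏ x ∈ F, (X x.2 - X x.1 : MvPolynomial (Fin N) K)) ∣ Q := by
  classical
  induction F using Finset.induction_on with
  | empty => simpa using one_dvd Q
  | @insert a F ha ih =>
      have hsort : ∀ x ∈ F, x.1 < x.2 := fun x hx => hF x (Finset.mem_insert_of_mem hx)
      obtain ⟨M, hM⟩ := ih hsort (fun x hx => hdvd x (Finset.mem_insert_of_mem hx))
      have hprime : Prime (X a.2 - X a.1 : MvPolynomial (Fin N) K) :=
        prime_X_sub_X (ne_of_lt (hF a (Finset.mem_insert_self a F)))
      have hadvd : (X a.2 - X a.1 : MvPolynomial (Fin N) K) ∣ Q :=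
        hdvd a (Finset.mem_insert_self a F)
      rw [hM] at hadvd
      rcases (hprime.dvd_mul).mp hadvd with h | h
      · exfalso
        obtain ⟨x, hx, hxdvd⟩ := (hprime.dvd_finset_prod_iff _).mp h
        refine not_dvd_X_sub_X (hF a (Finset.mem_insert_self a F)) (hsort x hx) ?_ hxdvd
        intro hxa
        apply ha
        have : a = x := by
          have h1 : a.1 = x.1 := congrArg Prod.fst hxa
          have h2 : a.2 = x.2 := congrArg Prod.snd hxa
          exact Sigma.ext h1 (by rw [h2])
        rwa [this]
      · obtain ⟨M', hM'⟩ := h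
        rw [Finset.prod_insert ha]
        exact ⟨M', by rw [hM, hM']; ring⟩


/-- the set of sorted pairs -/
def pairsP (N : ℕ) : Finset ((_ : Fin N) × Fin N) :=
  Finset.univ.sigma fun i => Finset.Ioi i

lemma mem_pairsP {x : (_ : Fin N) × Fin N} : x ∈ pairsP N ↔ x.1 < x.2 := by
  cases x; simp [pairsP]

/-- the Vandermonde polynomial -/
def VP (K : Type*) [Field K] (N : ℕ) : MvPolynomial (Fin N) K :=
  (Matrix.vandermonde fun i => X i).det

lemma VP_eq_prod : VP K N = ∏ x ∈ pairsP N, (X x.2 - X x.1) := by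
  rw [VP, Matrix.det_vandermonde, pairsP, Finset.prod_sigma]

lemma rename_VP (τ : Equiv.Perm (Fin N)) :
    rename τ (VP K N) = (Equiv.Perm.sign τ : ℤ) * VP K N := by
  have h1 : rename τ (VP K N)
      = (((rename τ).toRingHom : MvPolynomial (Fin N) K →+* _).mapMatrix
          (Matrix.vandermonde fun i => X i)).det := by
    rw [← RingHom.map_det]; rfl
  have h2 : ((rename (R := K) τ).toRingHom.mapMatrix (Matrix.vandermonde fun i => X i))
      = (Matrix.vandermonde (fun i => X i)).submatrix τ id := by
    ext i j
    simp [Matrix.vandermonde, Matrix.submatrix]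
  rw [h1, h2, Matrix.det_permute, VP]

lemma fsub_comp_swap {i j : Fin N} (hij : i ≠ j) :
    (fsub (K := K) i j) ∘ (Equiv.swap i j) = fsub i j := by
  funext k
  simp only [Function.comp_apply, fsub, Equiv.swap_apply_def]
  split_ifs <;> simp_all

lemma alt_imp_sAev_zero {Q : MvPolynomial (Fin N) K} {i j : Fin N} (hij : i ≠ j)
    (halt : rename (Equiv.swap i j) Q = -Q) : sAev i j Q = 0 := by
  have h1 : sAev i j (rename (Equiv.swap i j) Q) = sAev i j Q := by
    rw [sAev, aeval_rename, fsub_comp_swap hij]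
  rw [halt, map_neg] at h1
  have h2 : (2 : MvPolynomial (Fin N) K) * sAev i j Q = 0 := by linear_combination - h1
  rcases mul_eq_zero.mp h2 with h | h
  · exact absurd h two_ne_zero
  · exact h

theorem VP_dvd_of_alt {Q : MvPolynomial (Fin N) K}
    (halt : ∀ i j : Fin N, i ≠ j → rename (Equiv.swap i j) Q = -Q) :
    VP K N ∣ Q := by
  rw [VP_eq_prod]
  refine prod_pairs_dvd _ _ (fun x hx => mem_pairsP.mp hx) (fun x hx => ?_)
  have hlt := mem_pairsP.mp hx
  rw [dvd_iff_sAev_eq_zero]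
  exact alt_imp_sAev_zero (ne_of_lt hlt) (halt _ _ (ne_of_lt hlt))



end PolySide

section Adjoin
variable (K : Type*) [Field K] (N : ℕ)
/-- the subalgebra of Laurent polynomials in the first `N` variables -/
def LR : Subalgebra K (Fld K) :=
  Algebra.adjoin K ((Set.range fun i : Fin N => ZZ K i.val) ∪
    (Set.range fun i : Fin N => (ZZ K i.val)⁻¹))

lemma ZZ_mem (i : Fin N) : ZZ K i.val ∈ LR K N :=
  Algebra.subset_adjoin (Or.inl ⟨i, rfl⟩)

lemma ZZ_inv_mem (i : Fin N) : (ZZ K i.val)⁻¹ ∈ LR K N :=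
  Algebra.subset_adjoin (Or.inr ⟨i, rfl⟩)

lemma zpow_mem (i : Fin N) (m : ℤ) : ZZ K i.val ^ m ∈ LR K N := by
  rcases m with m | m
  · rw [Int.ofNat_eq_coe, zpow_natCast]
    exact pow_mem (ZZ_mem K N i) m
  · rw [zpow_negSucc, ← inv_pow]
    exact pow_mem (ZZ_inv_mem K N i) (m + 1)

lemma evF_mem {k : ℕ} (R : (Fin k → ℤ) →₀ K) (g : Fin k → Fin N) :
    evF K R (fun i => ZZ K (g i).val) ∈ LR K N := by
  rw [evF, Finsupp.sum]
  refine sum_mem fun e _ => mul_mem (Subalgebra.algebraMap_mem _ _)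
    (prod_mem fun i _ => zpow_mem K N (g i) (e i))

lemma lEv_mem (p : LaurentPolynomial K) (a b : Fin N) :
    lEv K p (ZZ K a.val / ZZ K b.val) ∈ LR K N := by
  rw [lEv, Finsupp.sum]
  refine sum_mem fun m _ => mul_mem (Subalgebra.algebraMap_mem _ _) ?_
  rw [div_zpow, div_eq_mul_inv, ← zpow_neg]
  exact mul_mem (zpow_mem K N a m) (zpow_mem K N b (-m))

lemma exists_clear {x : Fld K} (hx : x ∈ LR K N) :
    ∃ (m : ℕ) (Q : MvPolynomial (Fin N) K),
      ιF K N Q = x * (∏ i : Fin N, ZZ K i.val) ^ m := by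
  have hs : ∀ m : ℕ, ιF K N ((∏ i : Fin N, X i) ^ m) = (∏ i : Fin N, ZZ K i.val) ^ m := by
    intro m
    rw [map_pow, map_prod]
    simp only [ιF_X K N]
  induction hx using Algebra.adjoin_induction with
  | mem x hx =>
      rcases hx with ⟨i, rfl⟩ | ⟨i, rfl⟩
      · exact ⟨0, X i, by rw [pow_zero, mul_one, ιF_X K N]⟩
      · refine ⟨1, ∏ j ∈ Finset.univ.erase i, X j, ?_⟩
        rw [map_prod, pow_one, ← Finset.mul_prod_erase Finset.univ _ (Finset.mem_univ i),
          ← mul_assoc, inv_mul_cancel₀ (ZZ_ne_zero K i.val), one_mul]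
        exact Finset.prod_congr rfl fun j _ => ιF_X K N j
  | algebraMap r => exact ⟨0, C r, by rw [pow_zero, mul_one, ← MvPolynomial.algebraMap_eq,
      AlgHom.commutes]⟩
  | add x y hx hy ihx ihy =>
      obtain ⟨m₁, Q₁, h₁⟩ := ihx
      obtain ⟨m₂, Q₂, h₂⟩ := ihy
      refine ⟨m₁ + m₂, Q₁ * (∏ i : Fin N, X i) ^ m₂ + Q₂ * (∏ i : Fin N, X i) ^ m₁, ?_⟩
      rw [map_add, map_mul, map_mul, h₁, h₂, hs, hs, pow_add]
      ring
  | mul x y hx hy ihx ihy =>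
      obtain ⟨m₁, Q₁, h₁⟩ := ihx
      obtain ⟨m₂, Q₂, h₂⟩ := ihy
      refine ⟨m₁ + m₂, Q₁ * Q₂, ?_⟩
      rw [map_mul, h₁, h₂, pow_add]
      ring


end Adjoin

section Main
variable {K : Type*} [Field K] [CharZero K] (p : LaurentPolynomial K) (n n' : ℕ)
  (R : (Fin n → ℤ) →₀ K) (R' : (Fin n' → ℤ) →₀ K)

/-- one term of the symmetrized sum -/
def term (σ : Equiv.Perm (Fin (n + n'))) : Fld K :=
  evF K R (fun i => ZZ K (σ (Fin.castAdd n' i)).val) *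
    evF K R' (fun j => ZZ K (σ (Fin.natAdd n j)).val) *
    ∏ i : Fin n, ∏ j : Fin n',
      lEv K p (ZZ K (σ (Fin.castAdd n' i)).val / ZZ K (σ (Fin.natAdd n j)).val) *
        (ZZ K (σ (Fin.natAdd n j)).val /
          (ZZ K (σ (Fin.natAdd n j)).val - ZZ K (σ (Fin.castAdd n' i)).val))

lemma term_mul_Δ_mem (σ : Equiv.Perm (Fin (n + n'))) :
    term p n n' R R' σ * (∏ x ∈ pairsP (n + n'), (ZZ K x.2.val - ZZ K x.1.val)) ∈
      LR K (n + n') := by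
  classical
  set A : Fin n → Fin (n + n') := fun i => σ (Fin.castAdd n' i) with hA
  set B : Fin n' → Fin (n + n') := fun j => σ (Fin.natAdd n j) with hB
  have hAB : ∀ i j, A i ≠ B j := by
    intro i j hEq
    have h2 := σ.injective hEq
    have h3 : (Fin.castAdd n' i).val = (Fin.natAdd n j).val := by rw [h2]
    simp only [Fin.coe_castAdd, Fin.coe_natAdd] at h3
    have := i.isLt
    omega
  have hvalne : ∀ i j, (A i).val ≠ (B j).val := fun i j h => hAB i j (Fin.ext h)
  -- the sign, difference, generic-difference and pairing functions
  set s : Fin n × Fin n' → Fld K := fun ij => if A ij.1 < B ij.2 then 1 else -1 with hs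
  set d : Fin n × Fin n' → Fld K :=
    fun ij => ZZ K (B ij.2).val - ZZ K (A ij.1).val with hd
  set g : ((_ : Fin (n + n')) × Fin (n + n')) → Fld K := fun x => ZZ K x.2.val - ZZ K x.1.val with hg
  set h : Fin n × Fin n' → ((_ : Fin (n + n')) × Fin (n + n')) :=
    fun ij => if A ij.1 < B ij.2 then ⟨A ij.1, B ij.2⟩ else ⟨B ij.2, A ij.1⟩ with hh
  have hd_ne : ∀ ij, d ij ≠ 0 := fun ij => ZZ_sub_ne_zero K (Ne.symm (hvalne ij.1 ij.2))
  have hghs : ∀ ij, g (h ij) = s ij * d ij := by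
    intro ij
    by_cases hlt : A ij.1 < B ij.2
    · simp only [hh, hg, hs, hd, if_pos hlt]; ring
    · simp only [hh, hg, hs, hd, if_neg hlt]; ring
  have hinj : ∀ x ∈ (Finset.univ : Finset (Fin n × Fin n')), ∀ y ∈ Finset.univ,
      h x = h y → x = y := by
    rintro ⟨i, j⟩ - ⟨i', j'⟩ - hxy
    have hcast : ∀ a a' : Fin n, A a = A a' → a = a' := by
      intro a a' haa
      have h5 := σ.injective haa
      have hv : (Fin.castAdd n' a).val = (Fin.castAdd n' a').val := by rw [h5]
      simp only [Fin.coe_castAdd] at hv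
      exact Fin.ext hv
    have hnat : ∀ b b' : Fin n', B b = B b' → b = b' := by
      intro b b' hbb
      have h5 := σ.injective hbb
      have hv : (Fin.natAdd n b).val = (Fin.natAdd n b').val := by rw [h5]
      simp only [Fin.coe_natAdd] at hv
      exact Fin.ext (by omega)
    have hfst : (h (i, j)).1 = (h (i', j')).1 := by rw [hxy]
    have hsnd : (h (i, j)).2 = (h (i', j')).2 := by rw [hxy]
    by_cases h1 : A i < B j <;> by_cases h2 : A i' < B j' <;>
        simp only [hh, h1, h2, ite_true, ite_false] at hfst hsnd
    · exact Prod.ext (hcast _ _ hfst) (hnat _ _ hsnd)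
    · exact absurd hfst (hAB i j')
    · exact absurd hfst.symm (hAB i' j)
    · exact Prod.ext (hcast _ _ hsnd) (hnat _ _ hfst)
  have hsub : Finset.image h Finset.univ ⊆ pairsP (n + n') := by
    intro x hx
    obtain ⟨ij, -, rfl⟩ := Finset.mem_image.mp hx
    rw [mem_pairsP]
    by_cases hlt : A ij.1 < B ij.2
    · rw [hh]; simp only [if_pos hlt]; exact hlt
    · rw [hh]; simp only [if_neg hlt]
      exact lt_of_le_of_ne (not_lt.mp hlt) (Ne.symm (hAB ij.1 ij.2))
  -- key factorization of Δ
  have himg : ∏ x ∈ Finset.image h Finset.univ, g x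
      = (∏ ij : Fin n × Fin n', s ij) * ∏ ij : Fin n × Fin n', d ij := by
    rw [Finset.prod_image hinj, ← Finset.prod_mul_distrib]
    exact Finset.prod_congr rfl fun ij _ => hghs ij
  have hss : (∏ ij : Fin n × Fin n', s ij) * (∏ ij : Fin n × Fin n', s ij) = 1 := by
    rw [← Finset.prod_mul_distrib]
    refine Finset.prod_eq_one fun ij _ => ?_
    rw [hs]
    by_cases hlt : A ij.1 < B ij.2 <;> simp [hlt]
  have hDpair : (∏ ij : Fin n × Fin n', d ij) = ∏ i : Fin n, ∏ j : Fin n', d (i, j) :=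
    Fintype.prod_prod_type' (f := fun i j => d (i, j))
  have key : (∏ x ∈ pairsP (n + n'), g x)
      = (∏ ij : Fin n × Fin n', s ij) * (∏ i : Fin n, ∏ j : Fin n', d (i, j)) *
        (∏ x ∈ pairsP (n + n') \ Finset.image h Finset.univ, g x) := by
    rw [← Finset.prod_sdiff hsub, himg, hDpair]
    ring
  -- rewrite the double product in `term`
  have hdp : (∏ i : Fin n, ∏ j : Fin n',
        lEv K p (ZZ K (A i).val / ZZ K (B j).val) * (ZZ K (B j).val / d (i, j)))
      = (∏ i : Fin n, ∏ j : Fin n', lEv K p (ZZ K (A i).val / ZZ K (B j).val) * ZZ K (B j).val)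
        * (∏ i : Fin n, ∏ j : Fin n', d (i, j))⁻¹ := by
    rw [← Finset.prod_inv_distrib, ← Finset.prod_mul_distrib]
    refine Finset.prod_congr rfl fun i _ => ?_
    rw [← Finset.prod_inv_distrib, ← Finset.prod_mul_distrib]
    refine Finset.prod_congr rfl fun j _ => ?_
    rw [div_eq_mul_inv]
    ring
  have hdprod_ne : (∏ i : Fin n, ∏ j : Fin n', d (i, j)) ≠ 0 := by
    rw [← hDpair]
    exact Finset.prod_ne_zero_iff.mpr fun ij _ => hd_ne ij
  have hterm : term p n n' R R' σ * (∏ x ∈ pairsP (n + n'), g x)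
      = evF K R (fun i => ZZ K (A i).val) * evF K R' (fun j => ZZ K (B j).val) *
        ((∏ i : Fin n, ∏ j : Fin n',
          lEv K p (ZZ K (A i).val / ZZ K (B j).val) * ZZ K (B j).val)
          * (∏ ij : Fin n × Fin n', s ij) *
          (∏ x ∈ pairsP (n + n') \ Finset.image h Finset.univ, g x)) := by
    rw [term]
    have : (∏ i : Fin n, ∏ j : Fin n',
        lEv K p (ZZ K (σ (Fin.castAdd n' i)).val / ZZ K (σ (Fin.natAdd n j)).val) *
          (ZZ K (σ (Fin.natAdd n j)).val /
            (ZZ K (σ (Fin.natAdd n j)).val - ZZ K (σ (Fin.castAdd n' i)).val)))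
        = ∏ i : Fin n, ∏ j : Fin n',
            lEv K p (ZZ K (A i).val / ZZ K (B j).val) * (ZZ K (B j).val / d (i, j)) := rfl
    rw [this, hdp, key]
    field_simp
    ring
  rw [hterm]
  refine mul_mem (mul_mem (evF_mem K (n + n') R A) (evF_mem K (n + n') R' B)) (mul_mem (mul_mem ?_ ?_) ?_)
  · exact prod_mem fun i _ => prod_mem fun j _ =>
      mul_mem (lEv_mem K (n + n') p (A i) (B j)) (ZZ_mem K (n + n') (B j))
  · refine prod_mem fun ij _ => ?_
    by_cases hlt : A ij.1 < B ij.2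
    · simp only [hs, hlt, ite_true]; exact one_mem _
    · simp only [hs, hlt, ite_false]; exact neg_mem (one_mem _)
  · exact prod_mem fun x _ => sub_mem (ZZ_mem K (n + n') _) (ZZ_mem K (n + n') _)

/-- the symmetrized sum -/
def Sm : Fld K := ∑ σ : Equiv.Perm (Fin (n + n')), term p n n' R R' σ

lemma ψ_term (τ σ : Equiv.Perm (Fin (n + n'))) :
    ψ K (n + n') τ (term p n n' R R' σ) = term p n n' R R' (τ * σ) := by
  simp only [term, map_mul, map_prod, map_div₀, map_sub, ψ_evF, ψ_lEv, ψ_ZZ_fin,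
    Equiv.Perm.mul_apply]

lemma ψ_Sm (τ : Equiv.Perm (Fin (n + n'))) :
    ψ K (n + n') τ (Sm p n n' R R') = Sm p n n' R R' := by
  rw [Sm, map_sum]
  rw [Finset.sum_congr rfl fun σ _ => ψ_term p n n' R R' τ σ]
  exact Fintype.sum_equiv (Equiv.mulLeft τ) _ _ fun σ => rfl

/-- the Vandermonde element of the field -/
def ΔF (K : Type*) [Field K] (N : ℕ) : Fld K := ιF K N (VP K N)

lemma ΔF_eq (K : Type*) [Field K] [CharZero K] (N : ℕ) :
    ΔF K N = ∏ x ∈ pairsP N, (ZZ K x.2.val - ZZ K x.1.val) := by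
  rw [ΔF, VP_eq_prod, map_prod]
  exact Finset.prod_congr rfl fun x _ => by rw [map_sub, ιF_X, ιF_X]

lemma ΔF_ne (K : Type*) [Field K] [CharZero K] (N : ℕ) : ΔF K N ≠ 0 := by
  rw [ΔF_eq]
  refine Finset.prod_ne_zero_iff.mpr fun x hx => ?_
  have h5 : x.1.val < x.2.val := mem_pairsP.mp hx
  exact ZZ_sub_ne_zero K (Nat.ne_of_gt h5)

lemma ψ_ΔF (K : Type*) [Field K] [CharZero K] (N : ℕ) (τ : Equiv.Perm (Fin N)) :
    ψ K N τ (ΔF K N) = ((Equiv.Perm.sign τ : ℤ) : Fld K) * ΔF K N := by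
  rw [ΔF, ψ_ιF, rename_VP, map_mul, map_intCast]

lemma ψ_sprod (K : Type*) [Field K] [CharZero K] (N : ℕ) (τ : Equiv.Perm (Fin N)) :
    ψ K N τ (∏ i : Fin N, ZZ K i.val) = ∏ i : Fin N, ZZ K i.val := by
  rw [map_prod]
  rw [Finset.prod_congr rfl fun i _ => ψ_ZZ_fin K N τ i]
  exact Equiv.prod_comp τ fun i => ZZ K i.val

theorem stmt4_main :
    ∃ C : (Fin (n + n') → ℤ) →₀ K,
      (∀ (σ : Equiv.Perm (Fin (n + n'))) (e : Fin (n + n') → ℤ), C (e ∘ σ) = C e) ∧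
      evF K C (fun i => ZZ K i.val) = Sm p n n' R R' := by
  classical
  have hsprod_ne : (∏ i : Fin (n + n'), ZZ K i.val) ≠ 0 :=
    Finset.prod_ne_zero_iff.mpr fun i _ => ZZ_ne_zero K i.val
  have hmem : Sm p n n' R R' * ΔF K (n + n') ∈ LR K (n + n') := by
    rw [Sm, Finset.sum_mul, ΔF_eq]
    exact sum_mem fun σ _ => term_mul_Δ_mem p n n' R R' σ
  obtain ⟨m, Q₁, hQ₁⟩ := exists_clear K (n + n') hmem
  have hψQ₁ : ∀ τ : Equiv.Perm (Fin (n + n')),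
      ιF K (n + n') (rename τ Q₁)
        = ((Equiv.Perm.sign τ : ℤ) : Fld K) * ιF K (n + n') Q₁ := by
    intro τ
    rw [← ψ_ιF, hQ₁, map_mul, map_mul, ψ_Sm, ψ_ΔF, map_pow, ψ_sprod]
    ring
  have hQ₁τ : ∀ τ : Equiv.Perm (Fin (n + n')),
      rename τ Q₁ = ((Equiv.Perm.sign τ : ℤ) : MvPolynomial (Fin (n + n')) K) * Q₁ := by
    intro τ
    apply ιF_inj K (n + n')
    rw [hψQ₁, map_mul, map_intCast]
  have hswap : ∀ i j : Fin (n + n'), i ≠ j → rename (Equiv.swap i j) Q₁ = -Q₁ := by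
    intro i j hij
    rw [hQ₁τ, Equiv.Perm.sign_swap hij]
    push_cast
    ring
  obtain ⟨Q₂, hQ₂⟩ := VP_dvd_of_alt hswap
  have hVPne : VP K (n + n') ≠ 0 := fun h0 => ΔF_ne K (n + n') (by rw [ΔF, h0, map_zero])
  have hQ₂sym : ∀ τ : Equiv.Perm (Fin (n + n')), rename τ Q₂ = Q₂ := by
    intro τ
    have h1 := hQ₁τ τ
    rw [hQ₂, map_mul, rename_VP] at h1
    have hsne : ((Equiv.Perm.sign τ : ℤ) : MvPolynomial (Fin (n + n')) K) ≠ 0 := by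
      rcases Int.units_eq_one_or (Equiv.Perm.sign τ) with h | h <;> rw [h] <;> norm_num
    apply mul_left_cancel₀ (mul_ne_zero hsne hVPne)
    linear_combination h1
  have hSm : Sm p n n' R R' * (∏ i : Fin (n + n'), ZZ K i.val) ^ m = ιF K (n + n') Q₂ := by
    have h2 : ΔF K (n + n') * ιF K (n + n') Q₂
        = ΔF K (n + n') * (Sm p n n' R R' * (∏ i : Fin (n + n'), ZZ K i.val) ^ m) := by
      calc ΔF K (n + n') * ιF K (n + n') Q₂ = ιF K (n + n') (VP K (n + n') * Q₂) := by
            rw [map_mul, ΔF]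
        _ = ιF K (n + n') Q₁ := by rw [← hQ₂]
        _ = Sm p n n' R R' * ΔF K (n + n') * (∏ i : Fin (n + n'), ZZ K i.val) ^ m := hQ₁
        _ = _ := by ring
    exact (mul_left_cancel₀ (ΔF_ne K (n + n')) h2).symm
  -- construct the coefficient function
  have hembinj : Function.Injective
      (fun (d : Fin (n + n') →₀ ℕ) (i : Fin (n + n')) => (d i : ℤ) - m) := by
    intro d d' hdd
    ext i
    have := congrFun hdd i
    simp only at this
    omega
  set emb : (Fin (n + n') →₀ ℕ) ↪ (Fin (n + n') → ℤ) := ⟨_, hembinj⟩ with hemb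
  refine ⟨Finsupp.embDomain emb (AddMonoidAlgebra.coeff Q₂), ?_, ?_⟩
  · -- symmetry
    intro τ e
    by_cases he : ∃ dd : Fin (n + n') →₀ ℕ, emb dd = e
    · obtain ⟨dd, hdd⟩ := he
      have hd' : emb (Finsupp.equivMapDomain τ.symm dd) = e ∘ ⇑τ := by
        funext i
        show ((Finsupp.equivMapDomain τ.symm dd) i : ℤ) - m = e (τ i)
        rw [Finsupp.equivMapDomain_apply, Equiv.symm_symm, ← hdd]
        rfl
      rw [← hd', ← hdd, Finsupp.embDomain_apply_self, Finsupp.embDomain_apply_self]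
      show coeff (Finsupp.equivMapDomain τ.symm dd) Q₂ = coeff dd Q₂
      have h3 : Finsupp.mapDomain (⇑τ) (Finsupp.equivMapDomain τ.symm dd) = dd := by
        rw [Finsupp.equivMapDomain_eq_mapDomain, ← Finsupp.mapDomain_comp,
          Equiv.self_comp_symm, Finsupp.mapDomain_id]
      calc coeff (Finsupp.equivMapDomain τ.symm dd) Q₂
          = coeff (Finsupp.mapDomain (⇑τ) (Finsupp.equivMapDomain τ.symm dd)) (rename τ Q₂) :=
            (coeff_rename_mapDomain (⇑τ) τ.injective Q₂ _).symm
        _ = coeff dd Q₂ := by rw [h3, hQ₂sym τ]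
    · have he2 : ¬ ∃ dd : Fin (n + n') →₀ ℕ, emb dd = e ∘ ⇑τ := by
        rintro ⟨dd, hdd⟩
        refine he ⟨Finsupp.equivMapDomain τ dd, ?_⟩
        funext i
        show ((Finsupp.equivMapDomain τ dd) i : ℤ) - m = e i
        rw [Finsupp.equivMapDomain_apply]
        have h4 := congrFun hdd (τ.symm i)
        simp only [Function.comp_apply, Equiv.apply_symm_apply] at h4
        exact h4
      rw [Finsupp.embDomain_notin_range _ _ _ (by simpa using he2),
        Finsupp.embDomain_notin_range _ _ _ (by simpa using he)]
  · -- evaluation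
    have hev : evF K (Finsupp.embDomain emb (AddMonoidAlgebra.coeff Q₂)) (fun i => ZZ K i.val) *
        (∏ i : Fin (n + n'), ZZ K i.val) ^ m = ιF K (n + n') Q₂ := by
      rw [evF, Finsupp.sum_embDomain]
      conv_rhs => rw [Q₂.as_sum, map_sum]
      rw [Finsupp.sum, Finset.sum_mul]
      refine Finset.sum_congr rfl fun dd hdd => ?_
      have hmono : ιF K (n + n') (monomial dd (coeff dd Q₂))
          = algebraMap K (Fld K) (coeff dd Q₂) * ∏ i, ZZ K i.val ^ (dd i) :=
        ιF_monomial K (n + n') dd (coeff dd Q₂)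
      rw [hmono]
      have hZpow : ∀ i : Fin (n + n'),
          ZZ K i.val ^ ((emb dd : Fin (n + n') → ℤ) i) * ZZ K i.val ^ m
            = ZZ K i.val ^ (dd i) := by
        intro i
        show ZZ K i.val ^ ((dd i : ℤ) - m) * ZZ K i.val ^ m = _
        rw [← zpow_natCast (ZZ K i.val) m, ← zpow_add₀ (ZZ_ne_zero K i.val), sub_add_cancel,
          zpow_natCast]
      calc algebraMap K (Fld K) (coeff dd Q₂) *
            (∏ i, ZZ K i.val ^ ((emb dd : Fin (n + n') → ℤ) i)) *
            (∏ i : Fin (n + n'), ZZ K i.val) ^ m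
          = algebraMap K (Fld K) (coeff dd Q₂) *
            ∏ i, (ZZ K i.val ^ ((emb dd : Fin (n + n') → ℤ) i) * ZZ K i.val ^ m) := by
            rw [Finset.prod_mul_distrib, ← Finset.prod_pow]
            ring
        _ = _ := by rw [Finset.prod_congr rfl fun i _ => hZpow i]
    have := hev.trans hSm.symm
    exact mul_right_cancel₀ (pow_ne_zero m hsprod_ne) this

end Main
end Stmt4Aux

/-- Let `p` be a one-variable Laurent polynomial over a field `K` of
characteristic zero, and let `R`, `R'` be symmetric Laurent polynomials in `n`, resp. `n'`,
variables.  Then the rational function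
`G(z₁,…,z_{n+n'}) = ∑_{σ ∈ S_{n+n'}} σ·[R(z₁,…,z_n) R'(z_{n+1},…,z_{n+n'})
  ∏_{a ≤ n < b} p(z_a/z_b)·z_b/(z_b − z_a)]`
is a Laurent polynomial in `z₁,…,z_{n+n'}`, symmetric under all permutations of the
variables (i.e. it agrees, at the generic point, with the evaluation of some symmetric
Laurent-polynomial coefficient function `C`). -/
theorem stmt4 (K : Type*) [Field K] [CharZero K] (p : LaurentPolynomial K) (n n' : ℕ)
    (R : (Fin n → ℤ) →₀ K) (R' : (Fin n' → ℤ) →₀ K)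
    (hR : ∀ (σ : Equiv.Perm (Fin n)) (e : Fin n → ℤ), R (e ∘ σ) = R e)
    (hR' : ∀ (σ : Equiv.Perm (Fin n')) (e : Fin n' → ℤ), R' (e ∘ σ) = R' e) :
    ∃ C : (Fin (n + n') → ℤ) →₀ K,
      (∀ (σ : Equiv.Perm (Fin (n + n'))) (e : Fin (n + n') → ℤ), C (e ∘ σ) = C e) ∧
      evF K C (fun i => ZZ K i.val) =
        ∑ σ : Equiv.Perm (Fin (n + n')),
          evF K R (fun i => ZZ K (σ (Fin.castAdd n' i)).val) *
            evF K R' (fun j => ZZ K (σ (Fin.natAdd n j)).val) *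
            ∏ i : Fin n, ∏ j : Fin n',
              lEv K p (ZZ K (σ (Fin.castAdd n' i)).val / ZZ K (σ (Fin.natAdd n j)).val) *
                (ZZ K (σ (Fin.natAdd n j)).val /
                  (ZZ K (σ (Fin.natAdd n j)).val - ZZ K (σ (Fin.castAdd n' i)).val)) := by
  obtain ⟨C, hsym, hev⟩ := Stmt4Aux.stmt4_main p n n' R R'
  exact ⟨C, hsym, hev⟩

end
end

section
/- Let K be a field of characteristic zero, let p(x) be a Laurent polynomial over K, and set ζ(x) = p(x)/(1−x) ∈ K(x). For symmetric Laurent polynomials R in n variables and R' in n' variables over K, define R * R' := (1/(n!·n'!)) ∑_{σ ∈ S_{n+n'}} σ·[ R(z_1,…,z_n) · R'(z_{n+1},…,z_{n+n'}) · ∏_{1 ≤ a ≤ n < b ≤ n+n'} ζ(z_a/z_b) ], an element of K(z_1,…,z_{n+n'}) symmetric in all variables. Then this operation is associative: for symmetric Laurent polynomials R, R', R'' in n, n', n'' variables respectively, (R * R') * R'' = R * (R' * R'') as rational functions in z_1, …, z_{n+n'+n''}. -/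
open MvPolynomial

noncomputable section

/-- The structure function `ζ(x) = p(x)/(1 - x)`. -/
def zetaF (K : Type*) [Field K] (p : LaurentPolynomial K) (x : Fld K) : Fld K :=
  lEv K p x / (1 - x)

/-- The shuffle product: for `f` a (rational) function of `k₁` variables and `g` one of `k₂`
variables,
`(f * g)(z₁,…,z_{k₁+k₂}) := (k₁! k₂!)⁻¹ ∑_{σ ∈ S_{k₁+k₂}} σ·[ f(z₁,…,z_{k₁})
  g(z_{k₁+1},…,z_{k₁+k₂}) ∏_{a ≤ k₁ < b} ζ(z_a/z_b) ]`. -/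
def shuf (K : Type*) [Field K] (p : LaurentPolynomial K) (k₁ k₂ : ℕ)
    (f : (Fin k₁ → Fld K) → Fld K) (g : (Fin k₂ → Fld K) → Fld K) :
    (Fin (k₁ + k₂) → Fld K) → Fld K :=
  fun v => (algebraMap K (Fld K) ((k₁.factorial : K) * (k₂.factorial : K)))⁻¹ *
    ∑ σ : Equiv.Perm (Fin (k₁ + k₂)),
      f (fun i => v (σ (Fin.castAdd k₂ i))) * g (fun j => v (σ (Fin.natAdd k₁ j))) *
        ∏ i : Fin k₁, ∏ j : Fin k₂,
          zetaF K p (v (σ (Fin.castAdd k₂ i)) / v (σ (Fin.natAdd k₁ j)))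

namespace Stmt5Aux

open Equiv Finset

/-- Extend a permutation of the first `A` indices to `Fin (A+B)`. -/
def extE (A B : ℕ) (τ : Perm (Fin A)) : Perm (Fin (A + B)) :=
  finSumFinEquiv.permCongr (τ.sumCongr (Equiv.refl (Fin B)))

@[simp] lemma extE_castAdd (A B : ℕ) (τ : Perm (Fin A)) (i : Fin A) :
    extE A B τ (Fin.castAdd B i) = Fin.castAdd B (τ i) := by
  simp [extE, Equiv.permCongr_apply]

@[simp] lemma extE_natAdd (A B : ℕ) (τ : Perm (Fin A)) (j : Fin B) :
    extE A B τ (Fin.natAdd A j) = Fin.natAdd A j := by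
  simp [extE, Equiv.permCongr_apply]

/-- Extend a permutation of the last `B` indices to `Fin (A+B)`. -/
def extN (A B : ℕ) (τ : Perm (Fin B)) : Perm (Fin (A + B)) :=
  finSumFinEquiv.permCongr ((Equiv.refl (Fin A)).sumCongr τ)

@[simp] lemma extN_castAdd (A B : ℕ) (τ : Perm (Fin B)) (i : Fin A) :
    extN A B τ (Fin.castAdd B i) = Fin.castAdd B i := by
  simp [extN, Equiv.permCongr_apply]

@[simp] lemma extN_natAdd (A B : ℕ) (τ : Perm (Fin B)) (j : Fin B) :
    extN A B τ (Fin.natAdd A j) = Fin.natAdd A (τ j) := by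
  simp [extN, Equiv.permCongr_apply]

lemma sum_sum_mulRight {α M β : Type*} [Fintype α] [DecidableEq α] [Fintype β]
    [AddCommMonoid M] (e : β → Perm α) (G : Perm α → M) :
    ∑ τ : β, ∑ σ : Perm α, G (σ * e τ) = (Fintype.card β) • ∑ σ : Perm α, G σ := by
  have h : ∀ τ : β, ∑ σ : Perm α, G (σ * e τ) = ∑ σ : Perm α, G σ := fun τ =>
    Fintype.sum_equiv (Equiv.mulRight (e τ)) _ _ (fun σ => rfl)
  simp [h]

variable (K : Type*) [Field K] (p : LaurentPolynomial K)

def tripL (k₁ k₂ k₃ : ℕ) (f : (Fin k₁ → Fld K) → Fld K) (g : (Fin k₂ → Fld K) → Fld K)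
    (h : (Fin k₃ → Fld K) → Fld K) (v : Fin (k₁ + k₂ + k₃) → Fld K)
    (σ : Perm (Fin (k₁ + k₂ + k₃))) : Fld K :=
  f (fun i => v (σ (Fin.castAdd k₃ (Fin.castAdd k₂ i)))) *
    g (fun j => v (σ (Fin.castAdd k₃ (Fin.natAdd k₁ j)))) *
    h (fun l => v (σ (Fin.natAdd (k₁ + k₂) l))) *
    (∏ i : Fin k₁, ∏ j : Fin k₂, zetaF K p
      (v (σ (Fin.castAdd k₃ (Fin.castAdd k₂ i))) / v (σ (Fin.castAdd k₃ (Fin.natAdd k₁ j))))) *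
    (∏ i : Fin (k₁ + k₂), ∏ l : Fin k₃, zetaF K p
      (v (σ (Fin.castAdd k₃ i)) / v (σ (Fin.natAdd (k₁ + k₂) l))))

def tripR (k₁ k₂ k₃ : ℕ) (f : (Fin k₁ → Fld K) → Fld K) (g : (Fin k₂ → Fld K) → Fld K)
    (h : (Fin k₃ → Fld K) → Fld K) (v : Fin (k₁ + (k₂ + k₃)) → Fld K)
    (σ : Perm (Fin (k₁ + (k₂ + k₃)))) : Fld K :=
  f (fun i => v (σ (Fin.castAdd (k₂ + k₃) i))) *
    g (fun j => v (σ (Fin.natAdd k₁ (Fin.castAdd k₃ j)))) *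
    h (fun l => v (σ (Fin.natAdd k₁ (Fin.natAdd k₂ l)))) *
    (∏ j : Fin k₂, ∏ l : Fin k₃, zetaF K p
      (v (σ (Fin.natAdd k₁ (Fin.castAdd k₃ j))) / v (σ (Fin.natAdd k₁ (Fin.natAdd k₂ l))))) *
    (∏ i : Fin k₁, ∏ m : Fin (k₂ + k₃), zetaF K p
      (v (σ (Fin.castAdd (k₂ + k₃) i)) / v (σ (Fin.natAdd k₁ m))))

lemma expandL [CharZero K] (k₁ k₂ k₃ : ℕ) (f : (Fin k₁ → Fld K) → Fld K)
    (g : (Fin k₂ → Fld K) → Fld K) (h : (Fin k₃ → Fld K) → Fld K)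
    (v : Fin (k₁ + k₂ + k₃) → Fld K) :
    shuf K p (k₁ + k₂) k₃ (shuf K p k₁ k₂ f g) h v =
      (((k₁.factorial * k₂.factorial * k₃.factorial : ℕ) : Fld K))⁻¹ *
        ∑ σ : Perm (Fin (k₁ + k₂ + k₃)), tripL K p k₁ k₂ k₃ f g h v σ := by
  haveI : CharZero (Fld K) := charZero_of_injective_algebraMap (algebraMap K (Fld K)).injective
  have key2 : ∀ (τ : Perm (Fin (k₁ + k₂))) (σ : Perm (Fin (k₁ + k₂ + k₃))),
      ((algebraMap K (Fld K)) (↑(k₁ + k₂).factorial * ↑k₃.factorial))⁻¹ *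
        ((((algebraMap K (Fld K)) (↑k₁.factorial * ↑k₂.factorial))⁻¹ *
              (((f fun a => v (σ (Fin.castAdd k₃ (τ (Fin.castAdd k₂ a))))) *
                  g fun b => v (σ (Fin.castAdd k₃ (τ (Fin.natAdd k₁ b))))) *
                ∏ a : Fin k₁, ∏ b : Fin k₂,
                  zetaF K p (v (σ (Fin.castAdd k₃ (τ (Fin.castAdd k₂ a)))) /
                    v (σ (Fin.castAdd k₃ (τ (Fin.natAdd k₁ b)))))) *
            h fun b => v (σ (Fin.natAdd (k₁ + k₂) b))) *
          ∏ a : Fin (k₁ + k₂), ∏ b : Fin k₃,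
            zetaF K p (v (σ (Fin.castAdd k₃ a)) / v (σ (Fin.natAdd (k₁ + k₂) b))))
      = (((algebraMap K (Fld K)) (↑(k₁ + k₂).factorial * ↑k₃.factorial))⁻¹ *
          ((algebraMap K (Fld K)) (↑k₁.factorial * ↑k₂.factorial))⁻¹) *
          tripL K p k₁ k₂ k₃ f g h v (σ * extE (k₁ + k₂) k₃ τ) := by
    intro τ σ
    have hz : (∏ a : Fin (k₁ + k₂), ∏ b : Fin k₃,
          zetaF K p (v (σ (Fin.castAdd k₃ (τ a))) / v (σ (Fin.natAdd (k₁ + k₂) b)))) =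
        ∏ a : Fin (k₁ + k₂), ∏ b : Fin k₃,
          zetaF K p (v (σ (Fin.castAdd k₃ a)) / v (σ (Fin.natAdd (k₁ + k₂) b))) :=
      Equiv.prod_comp τ (fun a => ∏ b : Fin k₃,
        zetaF K p (v (σ (Fin.castAdd k₃ a)) / v (σ (Fin.natAdd (k₁ + k₂) b))))
    simp only [tripL, Equiv.Perm.mul_apply, extE_castAdd, extE_natAdd]
    rw [hz]; ring
  simp only [shuf, Finset.mul_sum, Finset.sum_mul]
  rw [Finset.sum_comm]
  refine (Finset.sum_congr rfl fun τ _ => Finset.sum_congr rfl fun σ _ => key2 τ σ).trans ?_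
  simp only [← Finset.mul_sum]
  rw [sum_sum_mulRight, Fintype.card_perm, Fintype.card_fin, nsmul_eq_mul, ← mul_assoc]
  congr 1
  have h1 : (((k₁ + k₂).factorial : K)) ≠ 0 := Nat.cast_ne_zero.mpr (Nat.factorial_ne_zero _)
  have h2 : ((k₁.factorial : K)) ≠ 0 := Nat.cast_ne_zero.mpr (Nat.factorial_ne_zero _)
  have h3 : ((k₂.factorial : K)) ≠ 0 := Nat.cast_ne_zero.mpr (Nat.factorial_ne_zero _)
  have h4 : ((k₃.factorial : K)) ≠ 0 := Nat.cast_ne_zero.mpr (Nat.factorial_ne_zero _)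
  have h1' : (((k₁ + k₂).factorial : Fld K)) ≠ 0 := Nat.cast_ne_zero.mpr (Nat.factorial_ne_zero _)
  have h2' : ((k₁.factorial : Fld K)) ≠ 0 := Nat.cast_ne_zero.mpr (Nat.factorial_ne_zero _)
  have h3' : ((k₂.factorial : Fld K)) ≠ 0 := Nat.cast_ne_zero.mpr (Nat.factorial_ne_zero _)
  have h4' : ((k₃.factorial : Fld K)) ≠ 0 := Nat.cast_ne_zero.mpr (Nat.factorial_ne_zero _)
  simp only [map_mul, map_natCast]
  push_cast
  field_simp

lemma expandR [CharZero K] (k₁ k₂ k₃ : ℕ) (f : (Fin k₁ → Fld K) → Fld K)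
    (g : (Fin k₂ → Fld K) → Fld K) (h : (Fin k₃ → Fld K) → Fld K)
    (v : Fin (k₁ + (k₂ + k₃)) → Fld K) :
    shuf K p k₁ (k₂ + k₃) f (shuf K p k₂ k₃ g h) v =
      (((k₁.factorial * k₂.factorial * k₃.factorial : ℕ) : Fld K))⁻¹ *
        ∑ σ : Perm (Fin (k₁ + (k₂ + k₃))), tripR K p k₁ k₂ k₃ f g h v σ := by
  haveI : CharZero (Fld K) := charZero_of_injective_algebraMap (algebraMap K (Fld K)).injective
  have key2 : ∀ (τ : Perm (Fin (k₂ + k₃))) (σ : Perm (Fin (k₁ + (k₂ + k₃)))),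
      ((algebraMap K (Fld K)) (↑k₁.factorial * ↑(k₂ + k₃).factorial))⁻¹ *
        ((f fun a => v (σ (Fin.castAdd (k₂ + k₃) a))) *
            (((algebraMap K (Fld K)) (↑k₂.factorial * ↑k₃.factorial))⁻¹ *
              (((g fun a => v (σ (Fin.natAdd k₁ (τ (Fin.castAdd k₃ a))))) *
                  h fun b => v (σ (Fin.natAdd k₁ (τ (Fin.natAdd k₂ b))))) *
                ∏ a : Fin k₂, ∏ b : Fin k₃,
                  zetaF K p (v (σ (Fin.natAdd k₁ (τ (Fin.castAdd k₃ a)))) /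
                    v (σ (Fin.natAdd k₁ (τ (Fin.natAdd k₂ b))))))) *
          ∏ a : Fin k₁, ∏ b : Fin (k₂ + k₃),
            zetaF K p (v (σ (Fin.castAdd (k₂ + k₃) a)) / v (σ (Fin.natAdd k₁ b))))
      = (((algebraMap K (Fld K)) (↑k₁.factorial * ↑(k₂ + k₃).factorial))⁻¹ *
          ((algebraMap K (Fld K)) (↑k₂.factorial * ↑k₃.factorial))⁻¹) *
          tripR K p k₁ k₂ k₃ f g h v (σ * extN k₁ (k₂ + k₃) τ) := by
    intro τ σ
    have hz : (∏ a : Fin k₁, ∏ b : Fin (k₂ + k₃),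
          zetaF K p (v (σ (Fin.castAdd (k₂ + k₃) a)) / v (σ (Fin.natAdd k₁ (τ b))))) =
        ∏ a : Fin k₁, ∏ b : Fin (k₂ + k₃),
          zetaF K p (v (σ (Fin.castAdd (k₂ + k₃) a)) / v (σ (Fin.natAdd k₁ b))) :=
      Finset.prod_congr rfl fun a _ => Equiv.prod_comp τ (fun b =>
        zetaF K p (v (σ (Fin.castAdd (k₂ + k₃) a)) / v (σ (Fin.natAdd k₁ b))))
    simp only [tripR, Equiv.Perm.mul_apply, extN_castAdd, extN_natAdd]
    rw [hz]; ring
  simp only [shuf, Finset.mul_sum, Finset.sum_mul]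
  rw [Finset.sum_comm]
  refine (Finset.sum_congr rfl fun τ _ => Finset.sum_congr rfl fun σ _ => key2 τ σ).trans ?_
  simp only [← Finset.mul_sum]
  rw [sum_sum_mulRight, Fintype.card_perm, Fintype.card_fin, nsmul_eq_mul, ← mul_assoc]
  congr 1
  have h1 : (((k₂ + k₃).factorial : K)) ≠ 0 := Nat.cast_ne_zero.mpr (Nat.factorial_ne_zero _)
  have h2 : ((k₁.factorial : K)) ≠ 0 := Nat.cast_ne_zero.mpr (Nat.factorial_ne_zero _)
  have h3 : ((k₂.factorial : K)) ≠ 0 := Nat.cast_ne_zero.mpr (Nat.factorial_ne_zero _)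
  have h4 : ((k₃.factorial : K)) ≠ 0 := Nat.cast_ne_zero.mpr (Nat.factorial_ne_zero _)
  have h1' : (((k₂ + k₃).factorial : Fld K)) ≠ 0 := Nat.cast_ne_zero.mpr (Nat.factorial_ne_zero _)
  have h2' : ((k₁.factorial : Fld K)) ≠ 0 := Nat.cast_ne_zero.mpr (Nat.factorial_ne_zero _)
  have h3' : ((k₂.factorial : Fld K)) ≠ 0 := Nat.cast_ne_zero.mpr (Nat.factorial_ne_zero _)
  have h4' : ((k₃.factorial : Fld K)) ≠ 0 := Nat.cast_ne_zero.mpr (Nat.factorial_ne_zero _)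
  simp only [map_mul, map_natCast]
  push_cast
  field_simp


@[simp] lemma csymm1 (k₁ k₂ k₃ : ℕ) (i : Fin k₁) :
    (finCongr (add_assoc k₁ k₂ k₃)).symm (Fin.castAdd (k₂ + k₃) i) =
      Fin.castAdd k₃ (Fin.castAdd k₂ i) := by
  apply Fin.ext; simp

@[simp] lemma csymm2 (k₁ k₂ k₃ : ℕ) (j : Fin k₂) :
    (finCongr (add_assoc k₁ k₂ k₃)).symm (Fin.natAdd k₁ (Fin.castAdd k₃ j)) =
      Fin.castAdd k₃ (Fin.natAdd k₁ j) := by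
  apply Fin.ext; simp

@[simp] lemma csymm3 (k₁ k₂ k₃ : ℕ) (l : Fin k₃) :
    (finCongr (add_assoc k₁ k₂ k₃)).symm (Fin.natAdd k₁ (Fin.natAdd k₂ l)) =
      Fin.natAdd (k₁ + k₂) l := by
  apply Fin.ext; simp; omega

lemma trip_eq (k₁ k₂ k₃ : ℕ) (f : (Fin k₁ → Fld K) → Fld K)
    (g : (Fin k₂ → Fld K) → Fld K) (h : (Fin k₃ → Fld K) → Fld K)
    (v : Fin (k₁ + k₂ + k₃) → Fld K) (σ : Perm (Fin (k₁ + k₂ + k₃))) :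
    tripL K p k₁ k₂ k₃ f g h v σ =
      tripR K p k₁ k₂ k₃ f g h (fun x => v ((finCongr (add_assoc k₁ k₂ k₃)).symm x))
        ((finCongr (add_assoc k₁ k₂ k₃)).permCongr σ) := by
  simp only [tripL, tripR, Equiv.permCongr_apply, Equiv.symm_apply_apply,
    Fin.prod_univ_add, Finset.prod_mul_distrib, csymm1, csymm2, csymm3]
  ring

end Stmt5Aux

/-- The shuffle product with structure function `ζ(x) = p(x)/(1−x)` is
associative: for symmetric Laurent polynomials `R, R', R''` in `n, n', n''` variables,
`(R * R') * R'' = R * (R' * R'')` as rational functions in `z₁, …, z_{n+n'+n''}` (i.e. the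
two sides agree at the generic point). -/
theorem stmt5 (K : Type*) [Field K] [CharZero K] (p : LaurentPolynomial K) (n n' n'' : ℕ)
    (R : (Fin n → ℤ) →₀ K) (R' : (Fin n' → ℤ) →₀ K) (R'' : (Fin n'' → ℤ) →₀ K)
    (hR : ∀ (σ : Equiv.Perm (Fin n)) (e : Fin n → ℤ), R (e ∘ σ) = R e)
    (hR' : ∀ (σ : Equiv.Perm (Fin n')) (e : Fin n' → ℤ), R' (e ∘ σ) = R' e)
    (hR'' : ∀ (σ : Equiv.Perm (Fin n'')) (e : Fin n'' → ℤ), R'' (e ∘ σ) = R'' e) :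
    shuf K p (n + n') n'' (shuf K p n n' (evF K R) (evF K R')) (evF K R'')
        (fun i => ZZ K i.val) =
      shuf K p n (n' + n'') (evF K R) (shuf K p n' n'' (evF K R') (evF K R''))
        (fun i => ZZ K i.val) := by
  rw [Stmt5Aux.expandL, Stmt5Aux.expandR]
  congr 1
  refine Fintype.sum_equiv (Equiv.permCongr (finCongr (add_assoc n n' n''))) _ _ fun σ => ?_
  have hv : (fun x : Fin (n + (n' + n'')) =>
      (fun i : Fin (n + n' + n'') => ZZ K i.val) ((finCongr (add_assoc n n' n'')).symm x)) =
      fun i : Fin (n + (n' + n'')) => ZZ K i.val := by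
    funext x
    simp
  have := Stmt5Aux.trip_eq K p n n' n'' (evF K R) (evF K R') (evF K R'')
    (fun i => ZZ K i.val) σ
  rw [hv] at this
  exact this


end
end

section
/- Let K be a field, let g(x) be a Laurent polynomial over K, and set ζ(x) = g(x)/(1−x) ∈ K(x). Write g(x)·(1 − x^{-1}) = ∑_{m ∈ ℤ} h_m x^m (a Laurent polynomial, so only finitely many h_m are nonzero). For integers a, b define σ(a,b) := z_1^a z_2^b ζ(z_1/z_2) + z_2^a z_1^b ζ(z_2/z_1) ∈ K(z_1, z_2). Then for all integers D and E one has ∑_{m ∈ ℤ} h_m · σ(D−m, E+m) = ∑_{m ∈ ℤ} h_m · σ(E−m, D+m). -/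
open MvPolynomial

noncomputable section

/-- The field of rational functions `K(z₁, z₂)`. -/
abbrev F2 (K : Type*) [Field K] := FractionRing (MvPolynomial (Fin 2) K)

/-- Evaluation of a one-variable Laurent polynomial `g` over `K` at an element of `K(z₁,z₂)`. -/
def lEval2 (K : Type*) [Field K] (g : LaurentPolynomial K) (x : F2 K) : F2 K :=
  Finsupp.sum g.coeff fun m c => algebraMap K (F2 K) c * x ^ m

/-- The structure function `ζ(x) = g(x)/(1 - x)`. -/
def zeta2 (K : Type*) [Field K] (g : LaurentPolynomial K) (x : F2 K) : F2 K :=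
  lEval2 K g x / (1 - x)

/-- `σ(a,b) = z₁^a z₂^b ζ(z₁/z₂) + z₂^a z₁^b ζ(z₂/z₁)`, the unnormalized shuffle product of
`z^a` and `z^b`. -/
def sigma2 (K : Type*) [Field K] (g : LaurentPolynomial K) (a b : ℤ) : F2 K :=
  (algebraMap (MvPolynomial (Fin 2) K) (F2 K) (X 0)) ^ a *
      (algebraMap (MvPolynomial (Fin 2) K) (F2 K) (X 1)) ^ b *
      zeta2 K g (algebraMap (MvPolynomial (Fin 2) K) (F2 K) (X 0) /
        algebraMap (MvPolynomial (Fin 2) K) (F2 K) (X 1)) +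
    (algebraMap (MvPolynomial (Fin 2) K) (F2 K) (X 1)) ^ a *
      (algebraMap (MvPolynomial (Fin 2) K) (F2 K) (X 0)) ^ b *
      zeta2 K g (algebraMap (MvPolynomial (Fin 2) K) (F2 K) (X 1) /
        algebraMap (MvPolynomial (Fin 2) K) (F2 K) (X 0))

def evalHom (K : Type*) [Field K] (x : F2 K) (hx : x ≠ 0) :
    LaurentPolynomial K →ₐ[K] F2 K :=
  AddMonoidAlgebra.lift K (F2 K) ℤ
    ((Units.coeHom (F2 K)).comp (zpowersHom (F2 K)ˣ (Units.mk0 x hx)))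

lemma lEval2_eq (K : Type*) [Field K] (g : LaurentPolynomial K) (x : F2 K) (hx : x ≠ 0) :
    lEval2 K g x = evalHom K x hx g := by
  rw [evalHom, AddMonoidAlgebra.lift_apply']
  refine Finsupp.sum_congr fun m _ => ?_
  simp [zpowersHom_apply, Units.val_zpow_eq_zpow_val]

lemma lEval2_T (K : Type*) [Field K] (n : ℤ) (x : F2 K) :
    lEval2 K (LaurentPolynomial.T n) x = x ^ n := by
  rw [lEval2, LaurentPolynomial.T, AddMonoidAlgebra.coeff_single, Finsupp.sum_single_index] <;> simp

lemma lEval2_mul (K : Type*) [Field K] (g h : LaurentPolynomial K) (x : F2 K) (hx : x ≠ 0) :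
    lEval2 K (g * h) x = lEval2 K g x * lEval2 K h x := by
  rw [lEval2_eq K _ x hx, lEval2_eq K g x hx, lEval2_eq K h x hx, map_mul]

lemma lEval2_one_sub_T (K : Type*) [Field K] (x : F2 K) (hx : x ≠ 0) :
    lEval2 K (1 - LaurentPolynomial.T (-1)) x = 1 - x⁻¹ := by
  rw [lEval2_eq K _ x hx, map_sub, map_one, ← lEval2_eq K _ x hx, lEval2_T,
    zpow_neg, zpow_one]

lemma key (K : Type*) [Field K] (g : LaurentPolynomial K) (x : F2 K) (hx : x ≠ 0)
    (hx1 : x ≠ 1) :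
    lEval2 K (g * (1 - LaurentPolynomial.T (-1))) x * zeta2 K g x⁻¹
      = lEval2 K g x * lEval2 K g x⁻¹ := by
  have h1 : (1 : F2 K) - x⁻¹ ≠ 0 :=
    sub_ne_zero.mpr fun h => hx1 (by rwa [eq_comm, inv_eq_one] at h)
  rw [lEval2_mul K _ _ x hx, lEval2_one_sub_T K x hx, zeta2, mul_assoc,
    mul_comm (1 - x⁻¹), div_mul_cancel₀ _ h1]


/-- Writing `g(x)(1 - x⁻¹) = ∑ₘ hₘ xᵐ`, for all integers `D, E` one has
`∑ₘ hₘ σ(D−m, E+m) = ∑ₘ hₘ σ(E−m, D+m)`: the defining quadratic relation of the quiver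
quantum toroidal algebra is respected by the assignment `e_d ↦ z^d` into the shuffle
algebra. -/
theorem stmt6 (K : Type*) [Field K] (g : LaurentPolynomial K) (D E : ℤ) :
    Finsupp.sum (g * (1 - LaurentPolynomial.T (-1))).coeff
        (fun m h => algebraMap K (F2 K) h * sigma2 K g (D - m) (E + m)) =
      Finsupp.sum (g * (1 - LaurentPolynomial.T (-1))).coeff
        (fun m h => algebraMap K (F2 K) h * sigma2 K g (E - m) (D + m)) := by
  set Z1 := algebraMap (MvPolynomial (Fin 2) K) (F2 K) (X 0) with hZ1def
  set Z2 := algebraMap (MvPolynomial (Fin 2) K) (F2 K) (X 1) with hZ2def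
  have hinj := IsFractionRing.injective (MvPolynomial (Fin 2) K) (F2 K)
  have h1 : Z1 ≠ 0 := fun h => X_ne_zero (R := K) 0 (hinj (by simpa [hZ1def] using h))
  have h2 : Z2 ≠ 0 := fun h => X_ne_zero (R := K) 1 (hinj (by simpa [hZ2def] using h))
  have h12 : Z1 ≠ Z2 := fun h => by
    have := X_injective (R := K) (hinj h)
    simp at this
  set u : F2 K := Z2 / Z1 with hudef
  have hu0 : u ≠ 0 := div_ne_zero h2 h1
  have hu1 : u ≠ 1 := fun h => h12 ((div_eq_one_iff_eq h1).mp h).symm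
  have hui : u⁻¹ = Z1 / Z2 := by rw [hudef, inv_div]
  have hui0 : u⁻¹ ≠ 0 := inv_ne_zero hu0
  have hui1 : u⁻¹ ≠ 1 := fun h => hu1 (by rwa [inv_eq_one] at h)
  have step : ∀ A B : ℤ,
      Finsupp.sum (g * (1 - LaurentPolynomial.T (-1))).coeff (fun m c => algebraMap K (F2 K) c * sigma2 K g (A - m) (B + m))
        = lEval2 K (g * (1 - LaurentPolynomial.T (-1))) u * (Z1 ^ A * Z2 ^ B * zeta2 K g u⁻¹)
          + lEval2 K (g * (1 - LaurentPolynomial.T (-1))) u⁻¹ * (Z2 ^ A * Z1 ^ B * zeta2 K g u) := by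
    intro A B
    rw [lEval2, lEval2, Finsupp.sum_mul, Finsupp.sum_mul, ← Finsupp.sum_add]
    refine Finsupp.sum_congr fun m _ => ?_
    rw [sigma2, ← hZ1def, ← hZ2def, ← hui, ← hudef]
    rw [zpow_sub₀ h1, zpow_add₀ h2, zpow_sub₀ h2, zpow_add₀ h1, hudef, div_zpow, hui,
      div_zpow]
    ring
  rw [step D E, step E D]
  have hkey2 := key K g u⁻¹ hui0 hui1
  rw [inv_inv] at hkey2
  have hkey : lEval2 K (g * (1 - LaurentPolynomial.T (-1))) u * zeta2 K g u⁻¹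
      = lEval2 K (g * (1 - LaurentPolynomial.T (-1))) u⁻¹ * zeta2 K g u := by
    rw [key K g u hu0 hu1, hkey2]; ring
  linear_combination (Z1 ^ D * Z2 ^ E - Z2 ^ D * Z1 ^ E) * hkey


end
end

section
/- Let K be a field, let k ≥ 1, let t_1, …, t_k be nonzero elements of K, and let g(x) be a Laurent polynomial over K such that (1 − t_a·x) divides g(x) for every a ∈ {1, …, k}. Fix a ∈ {1, …, k} and order the indices {1, …, k} as the sequence (a, a−1, …, 1, k, k−1, …, a+1); write b ≻ c if b precedes c in this sequence. Then, with cyclic conventions x_{k+1} = x_1 and t_{k+1} = t_1, the rational function ∏_{b ≻ c} g(x_c / x_b) divided by ∏_{c ∈ {1,…,k}, c ≠ a} (1 − x_c t_{c+1} / x_{c+1}) is a Laurent polynomial in x_1, …, x_k. -/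
open MvPolynomial

noncomputable section

/-- The field of rational functions `K(x₁, …, x_k)` (variables indexed by `Fin k`). -/
abbrev FF (K : Type*) [Field K] (k : ℕ) := FractionRing (MvPolynomial (Fin k) K)

/-- The generic variable `x_i`. -/
def xv (K : Type*) [Field K] (k : ℕ) (i : Fin k) : FF K k :=
  algebraMap (MvPolynomial (Fin k) K) (FF K k) (X i)

/-- Evaluation of a one-variable Laurent polynomial `g` over `K` at a rational function. -/
def gEv (K : Type*) [Field K] (k : ℕ) (g : LaurentPolynomial K) (x : FF K k) : FF K k :=
  Finsupp.sum g.coeff fun m c => algebraMap K (FF K k) c * x ^ m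

section Aux
variable {K : Type*} [Field K] {k : ℕ}

lemma gEv_eq (g : LaurentPolynomial K) (x : FF K k) (hx : x ≠ 0) :
    gEv K k g x =
      AddMonoidAlgebra.lift K (FF K k) ℤ
        ((Units.coeHom _).comp (zpowersHom _ (Units.mk0 x hx))) g := by
  rw [AddMonoidAlgebra.lift_apply]
  unfold gEv
  congr 1
  ext m c
  simp [Algebra.smul_def]

lemma gEv_mul (p q : LaurentPolynomial K) (x : FF K k) (hx : x ≠ 0) :
    gEv K k (p * q) x = gEv K k p x * gEv K k q x := by
  rw [gEv_eq _ _ hx, gEv_eq _ _ hx, gEv_eq _ _ hx, map_mul]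

lemma gEv_lin (r : K) (x : FF K k) (hx : x ≠ 0) :
    gEv K k (1 - LaurentPolynomial.C r * LaurentPolynomial.T 1) x
      = 1 - algebraMap K (FF K k) r * x := by
  rw [gEv_eq _ _ hx, map_sub, map_one, ← LaurentPolynomial.single_eq_C_mul_T,
    AddMonoidAlgebra.lift_single]
  simp [Algebra.smul_def]

lemma fin_sub_one_lt [NeZero k] (hk2 : 2 ≤ k) {y : Fin k} (hy : y ≠ 0) : y - 1 < y := by
  have h1 : (1 : Fin k).val = 1 := by
    rw [Fin.val_one', Nat.mod_eq_of_lt (by omega)]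
  have hyv : y.val ≠ 0 := fun h => hy (Fin.ext (by simp [h]))
  have hylt := y.isLt
  rw [Fin.lt_def, Fin.sub_def, h1]
  simp only
  have h2 : k - 1 + y.val = k + (y.val - 1) := by omega
  rw [h2, Nat.add_mod_left, Nat.mod_eq_of_lt (by omega)]
  omega

end Aux

section Good
variable (K : Type*) [Field K] (k : ℕ) [NeZero k]

lemma xv_ne (i : Fin k) : xv K k i ≠ 0 := by
  have hinj := IsFractionRing.injective (MvPolynomial (Fin k) K) (FF K k)
  intro h
  exact X_ne_zero (R := K) (σ := Fin k) i (hinj (by simp only [xv] at h; simp [h]))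

lemma prodxv_eq : (∏ i, xv K k i)
    = algebraMap (MvPolynomial (Fin k) K) (FF K k) (∏ i, X i) := by
  simp [xv, map_prod]

def Sgood : Subring (FF K k) where
  carrier := {y | ∃ (N : ℕ) (p : MvPolynomial (Fin k) K),
    y * (∏ i, xv K k i) ^ N = algebraMap (MvPolynomial (Fin k) K) (FF K k) p}
  one_mem' := ⟨0, 1, by simp⟩
  zero_mem' := ⟨0, 0, by simp⟩
  mul_mem' := by
    rintro y z ⟨N1, p1, h1⟩ ⟨N2, p2, h2⟩
    exact ⟨N1 + N2, p1 * p2, by rw [pow_add, map_mul, ← h1, ← h2]; ring⟩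
  add_mem' := by
    rintro y z ⟨N1, p1, h1⟩ ⟨N2, p2, h2⟩
    refine ⟨N1 + N2, p1 * (∏ i, X i) ^ N2 + p2 * (∏ i, X i) ^ N1, ?_⟩
    rw [RingHom.map_add, RingHom.map_mul, RingHom.map_mul, RingHom.map_pow, RingHom.map_pow,
      ← h1, ← h2, ← prodxv_eq, pow_add]
    ring
  neg_mem' := by
    rintro y ⟨N, p, h⟩
    exact ⟨N, -p, by rw [map_neg, ← h]; ring⟩

variable {K k}

lemma algK_mem (c : K) : algebraMap K (FF K k) c ∈ Sgood K k :=
  ⟨0, C c, by simp [IsScalarTower.algebraMap_apply K (MvPolynomial (Fin k) K) (FF K k)]⟩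

lemma xv_zpow_mem (i : Fin k) (m : ℤ) : (xv K k i) ^ m ∈ Sgood K k := by
  obtain ⟨n, rfl | rfl⟩ := Int.eq_nat_or_neg m
  · exact ⟨0, X i ^ n, by simp [xv, map_pow, zpow_natCast]⟩
  · refine ⟨n, (∏ j ∈ Finset.univ.erase i, X j) ^ n, ?_⟩
    rw [zpow_neg, zpow_natCast]
    have hP : (∏ j, xv K k j) = xv K k i * ∏ j ∈ Finset.univ.erase i, xv K k j :=
      (Finset.mul_prod_erase _ _ (Finset.mem_univ i)).symm
    rw [hP, mul_pow, inv_mul_cancel_left₀ (pow_ne_zero _ (xv_ne K k i))]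
    simp [xv, map_prod, map_pow]

lemma gEv_mem (q : LaurentPolynomial K) (b c : Fin k) :
    gEv K k q (xv K k c / xv K k b) ∈ Sgood K k := by
  unfold gEv
  rw [Finsupp.sum]
  refine sum_mem fun m _ => ?_
  refine mul_mem (algK_mem _) ?_
  rw [div_eq_mul_inv, mul_zpow, inv_zpow, ← zpow_neg]
  exact mul_mem (xv_zpow_mem c m) (xv_zpow_mem b (-m))

end Good

/-- (Indices written `0, …, k-1` via `Fin k`, with its cyclic addition and
subtraction realizing the cyclic conventions `x_{k+1} = x_1`, `t_{k+1} = t_1`.)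
Let `t : Fin k → K` be nonzero scalars and let `g` be a one-variable Laurent polynomial
divisible by `1 − t i · x` for every `i`.  Fix `a`, and order the indices as the cyclically
decreasing sequence `(a, a−1, …, a+1)` starting at `a`; then `b ≻ c` iff `a − b < a − c`
in `Fin k`.  The rational function `∏_{b ≻ c} g(x_c/x_b) / ∏_{c ≠ a} (1 − x_c t_{c+1}/x_{c+1})`
is a Laurent polynomial in `x_1, …, x_k` (i.e. some monomial multiple of it is a
polynomial). -/
theorem stmt8 (K : Type*) [Field K] (k : ℕ) [NeZero k] (hk : 1 ≤ k)
    (t : Fin k → K) (ht : ∀ i, t i ≠ 0)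
    (g : LaurentPolynomial K)
    (hdvd : ∀ i : Fin k,
      ((1 : LaurentPolynomial K) - LaurentPolynomial.C (t i) * LaurentPolynomial.T 1) ∣ g)
    (a : Fin k) :
    ∃ (P : MvPolynomial (Fin k) K) (N : ℕ),
      (∏ b : Fin k, ∏ c ∈ Finset.univ.filter (fun c : Fin k => a - b < a - c),
          gEv K k g (xv K k c / xv K k b)) /
        (∏ c ∈ Finset.univ.filter (fun c : Fin k => c ≠ a),
          (1 - xv K k c * algebraMap K (FF K k) (t (c + 1)) / xv K k (c + 1))) *
        (∏ i : Fin k, xv K k i) ^ N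
      = algebraMap (MvPolynomial (Fin k) K) (FF K k) P := by
  classical
  have hinj : Function.Injective (algebraMap (MvPolynomial (Fin k) K) (FF K k)) :=
    IsFractionRing.injective _ _
  have hx : ∀ i, xv K k i ≠ 0 := xv_ne K k
  have hwne : ∀ b c : Fin k, xv K k c / xv K k b ≠ 0 := fun b c => div_ne_zero (hx c) (hx b)
  choose qq hqq using hdvd
  -- swap the double product
  have hswap : (∏ b : Fin k, ∏ c ∈ Finset.univ.filter (fun c : Fin k => a - b < a - c),
        gEv K k g (xv K k c / xv K k b))
      = ∏ c : Fin k, ∏ b ∈ Finset.univ.filter (fun b : Fin k => a - b < a - c),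
        gEv K k g (xv K k c / xv K k b) := by
    refine Finset.prod_comm' ?_
    intro b c
    simp [and_comm]
  -- the successor pair belongs to each inner product
  have hk2 : ∀ c : Fin k, c ≠ a → 2 ≤ k := by
    intro c hc
    have : Nontrivial (Fin k) := ⟨⟨c, a, hc⟩⟩
    have h1 := Fintype.one_lt_card_iff_nontrivial (α := Fin k) |>.2 this
    simp at h1; omega
  have hsucc_ne : ∀ c : Fin k, c ≠ a → c + 1 ≠ c := by
    intro c hc h
    have h0 : c + 1 = c + 0 := by rw [h, add_zero]
    have h1 : (1 : Fin k) = 0 := add_left_cancel h0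
    have hk2' := hk2 c hc
    have h2 := congrArg Fin.val h1
    rw [Fin.val_one', Fin.val_zero, Nat.mod_eq_of_lt (by omega)] at h2
    exact one_ne_zero h2
  have hmem : ∀ c : Fin k, c ≠ a →
      c + 1 ∈ Finset.univ.filter (fun b : Fin k => a - b < a - c) := by
    intro c hc
    simp only [Finset.mem_filter, Finset.mem_univ, true_and]
    have hy : a - c ≠ 0 := sub_ne_zero_of_ne (Ne.symm hc)
    have hrw : a - (c + 1) = (a - c) - 1 := by rw [sub_sub]
    rw [hrw]
    exact fin_sub_one_lt (hk2 c hc) hy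
  -- key factorization per column c ≠ a
  have key : ∀ c : Fin k, c ≠ a →
      (∏ b ∈ Finset.univ.filter (fun b : Fin k => a - b < a - c),
        gEv K k g (xv K k c / xv K k b))
      = (1 - xv K k c * algebraMap K (FF K k) (t (c + 1)) / xv K k (c + 1)) *
        (gEv K k (qq (c + 1)) (xv K k c / xv K k (c + 1)) *
          ∏ b ∈ (Finset.univ.filter (fun b : Fin k => a - b < a - c)).erase (c + 1),
            gEv K k g (xv K k c / xv K k b)) := by
    intro c hc
    rw [← Finset.mul_prod_erase _ _ (hmem c hc), ← mul_assoc]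
    congr 1
    rw [hqq (c + 1), gEv_mul _ _ _ (hwne (c + 1) c), gEv_lin _ _ (hwne (c + 1) c)]
    congr 1
    rw [mul_div_assoc', mul_comm (algebraMap K (FF K k) (t (c + 1))) (xv K k c)]
  -- the cofactor
  set G : Fin k → FF K k := fun c =>
    if c = a then
      (∏ b ∈ Finset.univ.filter (fun b : Fin k => a - b < a - c),
        gEv K k g (xv K k c / xv K k b))
    else
      gEv K k (qq (c + 1)) (xv K k c / xv K k (c + 1)) *
        ∏ b ∈ (Finset.univ.filter (fun b : Fin k => a - b < a - c)).erase (c + 1),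
          gEv K k g (xv K k c / xv K k b)
    with hG
  have hNum : (∏ c : Fin k, ∏ b ∈ Finset.univ.filter (fun b : Fin k => a - b < a - c),
        gEv K k g (xv K k c / xv K k b))
      = (∏ c ∈ Finset.univ.filter (fun c : Fin k => c ≠ a),
          (1 - xv K k c * algebraMap K (FF K k) (t (c + 1)) / xv K k (c + 1))) *
        ∏ c : Fin k, G c := by
    rw [Finset.prod_filter, ← Finset.prod_mul_distrib]
    refine Finset.prod_congr rfl fun c _ => ?_
    by_cases hc : c = a
    · simp [hG, hc]
    · rw [if_pos hc, hG]
      simp only [if_neg hc]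
      exact key c hc
  have hD0 : (∏ c ∈ Finset.univ.filter (fun c : Fin k => c ≠ a),
      (1 - xv K k c * algebraMap K (FF K k) (t (c + 1)) / xv K k (c + 1))) ≠ 0 := by
    rw [Finset.prod_ne_zero_iff]
    intro c hcmem h0
    have hc : c ≠ a := (Finset.mem_filter.mp hcmem).2
    have h1 : xv K k c * algebraMap K (FF K k) (t (c + 1)) / xv K k (c + 1) = 1 :=
      (sub_eq_zero.mp h0).symm
    have h2 : xv K k c * algebraMap K (FF K k) (t (c + 1)) = xv K k (c + 1) :=
      (div_eq_one_iff_eq (hx (c + 1))).mp h1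
    have hC : algebraMap K (FF K k) (t (c + 1))
        = algebraMap (MvPolynomial (Fin k) K) (FF K k) (C (t (c + 1))) := by
      rw [IsScalarTower.algebraMap_apply K (MvPolynomial (Fin k) K) (FF K k),
        MvPolynomial.algebraMap_eq]
    simp only [xv] at h2
    have h3 : (X c * C (t (c + 1)) : MvPolynomial (Fin k) K) = X (c + 1) := by
      apply hinj
      rw [map_mul, ← hC]
      exact h2
    have h4 := congrArg (eval (fun i : Fin k => if i = c + 1 then (1 : K) else 0)) h3
    have hcc : c ≠ c + 1 := fun h => hsucc_ne c hc h.symm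
    rw [map_mul, eval_X, eval_X, eval_C, if_pos rfl, if_neg hcc, zero_mul] at h4
    exact zero_ne_one h4
  have hR : (∏ c : Fin k, G c) ∈ Sgood K k := by
    refine prod_mem fun c _ => ?_
    simp only [hG]
    by_cases hc : c = a
    · rw [if_pos hc]
      exact prod_mem fun b _ => gEv_mem g b c
    · rw [if_neg hc]
      exact mul_mem (gEv_mem _ _ _) (prod_mem fun b _ => gEv_mem g b c)
  obtain ⟨N, p, hNp⟩ := hR
  refine ⟨p, N, ?_⟩
  rw [hswap, hNum, mul_div_cancel_left₀ _ hD0]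
  exact hNp


end
end
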